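/- Median trick: let θ̂^{(1)}, …, θ̂^{(l)} be independent identically distributed real-valued random variables, l odd, and let θ ∈ ℝ, ε > 0, δ ∈ (0, 1/2) be such that P(|θ̂^{(j)} − θ| ≥ ε) ≤ δ for each j. Then the median θ̂ := med(θ̂^{(1)}, …, θ̂^{(l)}) satisfies P( |θ̂ − θ| ≥ ε ) ≤ (1/2)·[4δ(1 − δ)]^{l/2}. -/

import Mathlib

set_option maxHeartbeats 1000000

open MeasureTheory ProbabilityTheory Set ENNReal

/-- The sample median of `l` real numbers: for odd `l` this is the `(l+1)/2`-th order
statistic, i.e. the smallest value `x` such that at least `(l+1)/2` of the data points are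
`≤ x`. -/
noncomputable def sampleMedian {l : ℕ} (v : Fin l → ℝ) : ℝ :=
  sInf {x : ℝ | (l + 1) / 2 ≤ (Finset.univ.filter fun j => v j ≤ x).card}

lemma median_count {l t : ℕ} (hlt : l = 2 * t + 1) (v : Fin l → ℝ) (θ ε : ℝ)
    (h : ε ≤ |sampleMedian v - θ|) :
    t + 1 ≤ (Finset.univ.filter fun j => ε ≤ |v j - θ|).card := by
  have hlpos : 0 < l := by omega
  have : NeZero l := ⟨by omega⟩
  have hne : (Finset.univ : Finset (Fin l)).Nonempty := ⟨0, Finset.mem_univ 0⟩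
  set S : Set ℝ := {x : ℝ | (l + 1) / 2 ≤ (Finset.univ.filter fun j => v j ≤ x).card} with hS
  have hmed : sampleMedian v = sInf S := rfl
  have hhalf : (l + 1) / 2 = t + 1 := by omega
  have hSne : S.Nonempty := by
    refine ⟨Finset.univ.sup' hne v, ?_⟩
    have hfu : (Finset.univ.filter fun j => v j ≤ Finset.univ.sup' hne v) = Finset.univ := by
      apply Finset.filter_true_of_mem
      intro j _
      exact Finset.le_sup' v (Finset.mem_univ j)
    simp only [hS, mem_setOf_eq, hfu, Finset.card_univ, Fintype.card_fin]
    omega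
  have hSbdd : BddBelow S := by
    refine ⟨Finset.univ.inf' hne v, ?_⟩
    intro x hx
    have hcard : t + 1 ≤ (Finset.univ.filter fun j => v j ≤ x).card := by
      have := hx; simp only [hS, mem_setOf_eq, hhalf] at this; exact this
    have hfne : (Finset.univ.filter fun j => v j ≤ x).Nonempty :=
      Finset.card_pos.mp (by omega)
    obtain ⟨j, hj⟩ := hfne
    exact le_trans (Finset.inf'_le v (Finset.mem_univ j)) (Finset.mem_filter.mp hj).2
  have hmedS : sampleMedian v ∈ S := by
    by_contra hmem
    have hcard : (Finset.univ.filter fun j => v j ≤ sampleMedian v).card ≤ t := by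
      by_contra hc
      exact hmem (by simp only [hS, mem_setOf_eq, hhalf]; omega)
    set G := Finset.univ.filter fun j => sampleMedian v < v j with hG
    have hGne : G.Nonempty := by
      by_contra hGe
      have hfu : (Finset.univ.filter fun j => v j ≤ sampleMedian v) = Finset.univ := by
        apply Finset.filter_true_of_mem
        intro j _
        by_contra hj
        exact hGe ⟨j, Finset.mem_filter.mpr ⟨Finset.mem_univ j, lt_of_not_ge hj⟩⟩
      rw [hfu] at hcard
      simp only [Finset.card_univ, Fintype.card_fin] at hcard
      omega
    set c := G.inf' hGne v with hc
    have hmc : sampleMedian v < c := by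
      rw [hc, Finset.lt_inf'_iff]
      intro j hj
      exact (Finset.mem_filter.mp hj).2
    have hlb : ∀ x ∈ S, c ≤ x := by
      intro x hx
      by_contra hcx
      push_neg at hcx
      have hsub : (Finset.univ.filter fun j => v j ≤ x) ⊆
          Finset.univ.filter fun j => v j ≤ sampleMedian v := by
        intro j hj
        have hjx := (Finset.mem_filter.mp hj).2
        refine Finset.mem_filter.mpr ⟨Finset.mem_univ j, ?_⟩
        by_contra hjm
        have hjG : j ∈ G := Finset.mem_filter.mpr ⟨Finset.mem_univ j, lt_of_not_ge hjm⟩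
        have hcj : c ≤ v j := Finset.inf'_le v hjG
        linarith
      have hcc := Finset.card_le_card hsub
      have hx' : t + 1 ≤ (Finset.univ.filter fun j => v j ≤ x).card := by
        have := hx; simp only [hS, mem_setOf_eq, hhalf] at this; exact this
      omega
    have : c ≤ sampleMedian v := by rw [hmed]; exact le_csInf hSne hlb
    linarith
  rcases le_abs.mp h with h1 | h2
  · have hm1 : θ + ε ≤ sampleMedian v := by linarith
    have hcount : (Finset.univ.filter fun j => v j < θ + ε).card ≤ t := by
      by_contra hc
      push_neg at hc
      set F := Finset.univ.filter fun j => v j < θ + ε with hF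
      have hFne : F.Nonempty := Finset.card_pos.mp (by omega)
      set x := F.sup' hFne v with hx
      have hxlt : x < θ + ε := by
        rw [hx, Finset.sup'_lt_iff]
        intro j hj
        exact (Finset.mem_filter.mp hj).2
      have hxS : x ∈ S := by
        have hsub : F ⊆ Finset.univ.filter fun j => v j ≤ x := by
          intro j hj
          exact Finset.mem_filter.mpr ⟨Finset.mem_univ j, Finset.le_sup' v hj⟩
        have hcc := Finset.card_le_card hsub
        simp only [hS, mem_setOf_eq, hhalf]
        omega
      have hle : sampleMedian v ≤ x := by rw [hmed]; exact csInf_le hSbdd hxS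
      linarith
    have hsplit := Finset.card_filter_add_card_filter_not
      (s := (Finset.univ : Finset (Fin l))) (p := fun j => v j < θ + ε)
    have hsub : (Finset.univ.filter fun j => ¬ v j < θ + ε) ⊆
        Finset.univ.filter fun j => ε ≤ |v j - θ| := by
      intro j hj
      have hjv := (Finset.mem_filter.mp hj).2
      push_neg at hjv
      exact Finset.mem_filter.mpr ⟨Finset.mem_univ j, le_abs.mpr (Or.inl (by linarith))⟩
    have hcc := Finset.card_le_card hsub
    simp only [Finset.card_univ, Fintype.card_fin] at hsplit
    omega
  · have hm2 : sampleMedian v ≤ θ - ε := by linarith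
    have hmc : t + 1 ≤ (Finset.univ.filter fun j => v j ≤ sampleMedian v).card := by
      have := hmedS; simp only [hS, mem_setOf_eq, hhalf] at this; exact this
    have hsub : (Finset.univ.filter fun j => v j ≤ sampleMedian v) ⊆
        Finset.univ.filter fun j => ε ≤ |v j - θ| := by
      intro j hj
      have hjv := (Finset.mem_filter.mp hj).2
      exact Finset.mem_filter.mpr ⟨Finset.mem_univ j, le_abs.mpr (Or.inr (by linarith))⟩
    have hcc := Finset.card_le_card hsub
    omega

lemma final_real (t : ℕ) (p δ : ℝ) (hp0 : 0 ≤ p) (hpδ : p ≤ δ) (hδ0 : 0 < δ)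
    (hδ : δ < 1 / 2) :
    (4 : ℝ) ^ t * (p ^ (t + 1) * (1 - p) ^ t) ≤
      (1 / 2) * (4 * δ * (1 - δ)) ^ (((2 * t + 1 : ℕ) : ℝ) / 2) := by
  have hδ1 : δ * (1 - δ) > 0 := by nlinarith
  have hsq := Real.sq_sqrt hδ1.le
  set s := Real.sqrt (δ * (1 - δ)) with hs
  have hs0 : 0 ≤ s := Real.sqrt_nonneg _
  have hδs : δ ≤ s := by
    have h2 : Real.sqrt (δ ^ 2) ≤ s := Real.sqrt_le_sqrt (by nlinarith)
    rwa [Real.sqrt_sq hδ0.le] at h2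
  have hc : (0 : ℝ) < 4 * δ * (1 - δ) := by nlinarith
  have hrhs : (4 * δ * (1 - δ)) ^ (((2 * t + 1 : ℕ) : ℝ) / 2)
      = (4 * δ * (1 - δ)) ^ t * (2 * s) := by
    have hexp : ((2 * t + 1 : ℕ) : ℝ) / 2 = (t : ℝ) + 1 / 2 := by push_cast; ring
    rw [hexp, Real.rpow_add hc, Real.rpow_natCast]
    congr 1
    rw [← Real.sqrt_eq_rpow, show 4 * δ * (1 - δ) = 4 * (δ * (1 - δ)) by ring,
      Real.sqrt_mul (by norm_num : (0:ℝ) ≤ 4), show (4 : ℝ) = 2 ^ 2 by norm_num,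
      Real.sqrt_sq (by norm_num : (0:ℝ) ≤ 2)]
  rw [hrhs, show (1 / 2 : ℝ) * ((4 * δ * (1 - δ)) ^ t * (2 * s))
      = 4 ^ t * ((δ * (1 - δ)) ^ t * s) by
        rw [show 4 * δ * (1 - δ) = 4 * (δ * (1 - δ)) by ring, mul_pow]; ring]
  apply mul_le_mul_of_nonneg_left _ (by positivity)
  have h1 : p * (1 - p) ≤ δ * (1 - δ) := by nlinarith
  have h2 : p ≤ s := le_trans hpδ hδs
  calc p ^ (t + 1) * (1 - p) ^ t = (p * (1 - p)) ^ t * p := by rw [mul_pow]; ring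
    _ ≤ (δ * (1 - δ)) ^ t * s := by
        apply mul_le_mul (pow_le_pow_left₀ (by nlinarith) h1 t) h2 hp0 (by positivity)

lemma card_filter_ge {l t : ℕ} (hlt : l = 2 * t + 1) :
    (Finset.univ.filter fun T : Finset (Fin l) => t + 1 ≤ T.card).card = 4 ^ t := by
  classical
  set A := Finset.univ.filter fun T : Finset (Fin l) => t + 1 ≤ T.card with hA
  set B := Finset.univ.filter fun T : Finset (Fin l) => ¬ t + 1 ≤ T.card with hB
  have htot : A.card + B.card = 2 ^ l := by
    rw [hA, hB, Finset.card_filter_add_card_filter_not, Finset.card_univ,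
      Fintype.card_finset, Fintype.card_fin]
  have hcl : ∀ T : Finset (Fin l), T.card ≤ l := fun T => by
    simpa using Finset.card_le_univ T
  have hcompl : ∀ T : Finset (Fin l), Tᶜ.card = l - T.card := fun T => by
    rw [Finset.card_compl, Fintype.card_fin]
  have hbij : A.card = B.card := by
    refine Finset.card_bij' (fun T _ => Tᶜ) (fun T _ => Tᶜ) ?_ ?_ ?_ ?_
    · intro T hT
      have h1 := (Finset.mem_filter.mp hT).2
      show Tᶜ ∈ B
      refine Finset.mem_filter.mpr ⟨Finset.mem_univ _, ?_⟩
      rw [hcompl T]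
      have := hcl T
      omega
    · intro T hT
      have h1 := (Finset.mem_filter.mp hT).2
      show Tᶜ ∈ A
      refine Finset.mem_filter.mpr ⟨Finset.mem_univ _, ?_⟩
      rw [hcompl T]
      have := hcl T
      omega
    · intro T _; exact compl_compl T
    · intro T _; exact compl_compl T
  have hpow : (2 : ℕ) ^ l = 2 * 4 ^ t := by
    subst hlt
    rw [pow_succ, pow_mul]
    ring
  omega

/-- **The median trick (inequality (4.3))**: if `θ̂⁽¹⁾, …, θ̂⁽ˡ⁾` are i.i.d. real random
variables, `l` odd, and `P(|θ̂⁽ʲ⁾ − θ| ≥ ε) ≤ δ` for each `j` with `δ ∈ (0, 1/2)`, then the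
median `θ̂ = med(θ̂⁽¹⁾, …, θ̂⁽ˡ⁾)` satisfies
`P(|θ̂ − θ| ≥ ε) ≤ (1/2)·[4δ(1 − δ)]^{l/2}`. -/
theorem median_trick
    {Ω : Type*} [MeasurableSpace Ω] (μ : Measure Ω) [IsProbabilityMeasure μ]
    (l : ℕ) (hl : Odd l)
    (est : Fin l → Ω → ℝ) (hmeas : ∀ j, Measurable (est j))
    (hindep : iIndepFun est μ)
    (hident : ∀ i j, IdentDistrib (est i) (est j) μ μ)
    (θ ε δ : ℝ) (hε : 0 < ε) (hδ0 : 0 < δ) (hδ : δ < 1 / 2)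
    (hdev : ∀ j, μ {ω | ε ≤ |est j ω - θ|} ≤ ENNReal.ofReal δ) :
    μ {ω | ε ≤ |sampleMedian (fun j => est j ω) - θ|} ≤
      ENNReal.ofReal ((1 / 2) * (4 * δ * (1 - δ)) ^ ((l : ℝ) / 2)) := by
  classical
  obtain ⟨t, hlt⟩ := hl
  have hlpos : 0 < l := by omega
  set Dset : Set ℝ := {x : ℝ | ε ≤ |x - θ|} with hDset
  have hDmeas : MeasurableSet Dset := (measurable_id.sub_const θ).abs measurableSet_Ici
  set j0 : Fin l := ⟨0, hlpos⟩ with hj0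
  set p : ℝ := (μ (est j0 ⁻¹' Dset)).toReal with hp
  have hp0 : 0 ≤ p := ENNReal.toReal_nonneg
  have hAeq : ∀ j, μ (est j ⁻¹' Dset) = ENNReal.ofReal p := by
    intro j
    rw [(hident j j0).measure_mem_eq hDmeas, hp, ENNReal.ofReal_toReal (measure_ne_top μ _)]
  have hpδ : p ≤ δ := by
    have h0 : μ (est j0 ⁻¹' Dset) ≤ ENNReal.ofReal δ := hdev j0
    calc p = (μ (est j0 ⁻¹' Dset)).toReal := hp
      _ ≤ (ENNReal.ofReal δ).toReal := ENNReal.toReal_mono ENNReal.ofReal_ne_top h0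
      _ = δ := ENNReal.toReal_ofReal hδ0.le
  have hp1 : 1 - p ≥ 0 := by linarith
  have hcompl : ∀ j, μ (est j ⁻¹' Dsetᶜ) = ENNReal.ofReal (1 - p) := by
    intro j
    rw [Set.preimage_compl, prob_compl_eq_one_sub ((hmeas j) hDmeas), hAeq j,
      ENNReal.ofReal_sub _ hp0, ENNReal.ofReal_one]
  set 𝒯 : Finset (Finset (Fin l)) := Finset.univ.filter fun T => t + 1 ≤ T.card with h𝒯
  set E : Finset (Fin l) → Set Ω :=
    fun T => ⋂ j, est j ⁻¹' (if j ∈ T then Dset else Dsetᶜ) with hE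
  have hsub : {ω | ε ≤ |sampleMedian (fun j => est j ω) - θ|} ⊆ ⋃ T ∈ 𝒯, E T := by
    intro ω hω
    have hcard := median_count hlt (fun j => est j ω) θ ε hω
    refine Set.mem_iUnion₂.mpr ⟨Finset.univ.filter fun j => ε ≤ |est j ω - θ|,
      Finset.mem_filter.mpr ⟨Finset.mem_univ _, hcard⟩, ?_⟩
    refine Set.mem_iInter.mpr fun j => ?_
    by_cases hj : ε ≤ |est j ω - θ|
    · have hjT : j ∈ Finset.univ.filter fun j => ε ≤ |est j ω - θ| :=
        Finset.mem_filter.mpr ⟨Finset.mem_univ j, hj⟩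
      rw [if_pos hjT]
      exact hj
    · have hjT : j ∉ Finset.univ.filter fun j => ε ≤ |est j ω - θ| := by
        simp [Finset.mem_filter, hj]
      rw [if_neg hjT]
      exact hj
  have hET : ∀ T ∈ 𝒯, μ (E T) ≤ ENNReal.ofReal (p ^ (t + 1) * (1 - p) ^ t) := by
    intro T hT
    have hTcard : t + 1 ≤ T.card := (Finset.mem_filter.mp hT).2
    have hTle : T.card ≤ l := by simpa using Finset.card_le_univ T
    have hmeas' : ∀ j : Fin l, j ∈ Finset.univ →
        MeasurableSet (if j ∈ T then Dset else Dsetᶜ) := by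
      intro j _
      by_cases hj : j ∈ T
      · rw [if_pos hj]; exact hDmeas
      · rw [if_neg hj]; exact hDmeas.compl
    have hprod := hindep.measure_inter_preimage_eq_mul Finset.univ hmeas'
    have hEeq : E T = ⋂ j ∈ Finset.univ, est j ⁻¹' (if j ∈ T then Dset else Dsetᶜ) := by
      simp [hE]
    rw [hEeq, hprod]
    have hfilterT : Finset.univ.filter (fun j => j ∈ T) = T := Finset.filter_univ_mem T
    have hfilterTc : Finset.univ.filter (fun j => ¬ j ∈ T) = Tᶜ := by
      ext j; simp
    calc ∏ j, μ (est j ⁻¹' (if j ∈ T then Dset else Dsetᶜ))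
        = ∏ j, (if j ∈ T then ENNReal.ofReal p else ENNReal.ofReal (1 - p)) := by
          refine Finset.prod_congr rfl fun j _ => ?_
          by_cases hj : j ∈ T
          · rw [if_pos hj, if_pos hj, hAeq]
          · rw [if_neg hj, if_neg hj, hcompl]
      _ = ENNReal.ofReal p ^ T.card * ENNReal.ofReal (1 - p) ^ (l - T.card) := by
          rw [Finset.prod_ite, Finset.prod_const, Finset.prod_const, hfilterT, hfilterTc,
            Finset.card_compl, Fintype.card_fin]
      _ = ENNReal.ofReal (p ^ T.card * (1 - p) ^ (l - T.card)) := by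
          rw [← ENNReal.ofReal_pow hp0, ← ENNReal.ofReal_pow hp1,
            ← ENNReal.ofReal_mul (pow_nonneg hp0 _)]
      _ ≤ ENNReal.ofReal (p ^ (t + 1) * (1 - p) ^ t) := by
          apply ENNReal.ofReal_le_ofReal
          have hple : p ≤ 1 - p := by linarith
          calc p ^ T.card * (1 - p) ^ (l - T.card)
              = p ^ (t + 1) * (p ^ (T.card - (t + 1)) * (1 - p) ^ (l - T.card)) := by
                rw [← mul_assoc, ← pow_add]
                congr 2
                omega
            _ ≤ p ^ (t + 1) * ((1 - p) ^ (T.card - (t + 1)) * (1 - p) ^ (l - T.card)) := by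
                apply mul_le_mul_of_nonneg_left _ (pow_nonneg hp0 _)
                exact mul_le_mul_of_nonneg_right (pow_le_pow_left₀ hp0 hple _)
                  (pow_nonneg hp1 _)
            _ = p ^ (t + 1) * (1 - p) ^ t := by
                rw [← pow_add]
                congr 2
                omega
  have hcard𝒯 : 𝒯.card = 4 ^ t := card_filter_ge hlt
  calc μ {ω | ε ≤ |sampleMedian (fun j => est j ω) - θ|}
      ≤ μ (⋃ T ∈ 𝒯, E T) := measure_mono hsub
    _ ≤ ∑ T ∈ 𝒯, μ (E T) := measure_biUnion_finset_le 𝒯 E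
    _ ≤ ∑ _T ∈ 𝒯, ENNReal.ofReal (p ^ (t + 1) * (1 - p) ^ t) := Finset.sum_le_sum hET
    _ = (𝒯.card : ℝ≥0∞) * ENNReal.ofReal (p ^ (t + 1) * (1 - p) ^ t) := by
        rw [Finset.sum_const, nsmul_eq_mul]
    _ = ENNReal.ofReal ((4 : ℝ) ^ t * (p ^ (t + 1) * (1 - p) ^ t)) := by
        have h4 : ((4 ^ t : ℕ) : ℝ≥0∞) = ENNReal.ofReal ((4 : ℝ) ^ t) := by
          rw [show ((4 : ℝ) ^ t) = ((4 ^ t : ℕ) : ℝ) by push_cast; ring, ENNReal.ofReal_natCast]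
        rw [hcard𝒯, h4, ← ENNReal.ofReal_mul (by positivity)]
    _ ≤ ENNReal.ofReal ((1 / 2) * (4 * δ * (1 - δ)) ^ ((l : ℝ) / 2)) := by
        rw [hlt]
        exact ENNReal.ofReal_le_ofReal (final_real t p δ hp0 hpδ hδ0 hδ)
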